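/- arXiv:2510.14674 — 3 statements merged into one kernel-verified Lean document; each statement's English description precedes it below -/
import Mathlib

section
/- For every integer t ≥ 4, every n-vertex graph containing no path on t vertices as a subgraph has at most ((t−2)/2)·n edges. -/
set_option linter.unusedSectionVars false

open Finset

/-- `Contains G F` means `G` has a subgraph isomorphic to `F` (a copy of `F`),
i.e. there is an injective graph homomorphism from `F` to `G`. -/
def Contains {α β : Type*} (G : SimpleGraph α) (F : SimpleGraph β) : Prop :=
  ∃ f : β → α, Function.Injective f ∧ ∀ u v : β, F.Adj u v → G.Adj (f u) (f v)

section EG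

variable {V : Type*} [Fintype V] [DecidableEq V] (G : SimpleGraph V) [DecidableRel G.Adj]

/-- A path with `k` vertices inside `S`, indexed by naturals. -/
def EGPath (S : Finset V) (k : ℕ) (p : ℕ → V) : Prop :=
  (∀ i < k, p i ∈ S) ∧ (∀ i < k, ∀ j < k, p i = p j → i = j) ∧
    ∀ i, i + 1 < k → G.Adj (p i) (p (i + 1))

/-- Sum over `v ∈ S` of the degree of `v` inside `S`. -/
def egD (S : Finset V) : ℕ := ∑ v ∈ S, (G.neighborFinset v ∩ S).card

lemma egPath_card_le {S : Finset V} {k : ℕ} {p : ℕ → V} (h : EGPath G S k p) :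
    k ≤ S.card := by
  have hsub : (Finset.range k).image p ⊆ S := by
    intro x hx
    obtain ⟨i, hi, rfl⟩ := Finset.mem_image.1 hx
    exact h.1 i (Finset.mem_range.1 hi)
  have hcard : ((Finset.range k).image p).card = k := by
    rw [Finset.card_image_of_injOn, Finset.card_range]
    intro i hi j hj hij
    exact h.2.1 i (Finset.mem_range.1 hi) j (Finset.mem_range.1 hj) hij
  calc k = ((Finset.range k).image p).card := hcard.symm
    _ ≤ S.card := Finset.card_le_card hsub

lemma egD_trivial (S : Finset V) : egD G S ≤ S.card * (S.card - 1) := by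
  have h : ∀ v ∈ S, (G.neighborFinset v ∩ S).card ≤ S.card - 1 := by
    intro v hv
    have hsub : G.neighborFinset v ∩ S ⊆ S.erase v := by
      intro u hu
      rw [Finset.mem_inter, SimpleGraph.mem_neighborFinset] at hu
      exact Finset.mem_erase.2 ⟨fun h => G.irrefl (h ▸ hu.1), hu.2⟩
    calc (G.neighborFinset v ∩ S).card ≤ (S.erase v).card := Finset.card_le_card hsub
      _ = S.card - 1 := Finset.card_erase_of_mem hv
  calc egD G S ≤ ∑ _v ∈ S, (S.card - 1) := Finset.sum_le_sum h
    _ = S.card * (S.card - 1) := by rw [Finset.sum_const, smul_eq_mul]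

lemma egD_erase {S : Finset V} {v : V} (hv : v ∈ S) :
    egD G S = egD G (S.erase v) + 2 * (G.neighborFinset v ∩ S).card := by
  have key : ∀ u ∈ S.erase v, (G.neighborFinset u ∩ S).card
      = (G.neighborFinset u ∩ S.erase v).card + (if G.Adj v u then 1 else 0) := by
    intro u hu
    obtain ⟨hne, huS⟩ := Finset.mem_erase.1 hu
    have h1 : G.neighborFinset u ∩ S.erase v = (G.neighborFinset u ∩ S).erase v := by
      ext x
      simp only [Finset.mem_inter, Finset.mem_erase]
      tauto
    by_cases hadj : G.Adj v u
    · have hvmem : v ∈ G.neighborFinset u ∩ S :=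
        Finset.mem_inter.2 ⟨by rw [SimpleGraph.mem_neighborFinset]; exact hadj.symm, hv⟩
      rw [if_pos hadj, h1, Finset.card_erase_of_mem hvmem]
      have h2 : 1 ≤ (G.neighborFinset u ∩ S).card := Finset.card_pos.2 ⟨v, hvmem⟩
      omega
    · have hvmem : v ∉ G.neighborFinset u ∩ S := by
        rw [Finset.mem_inter, SimpleGraph.mem_neighborFinset]
        exact fun h => hadj h.1.symm
      rw [if_neg hadj, h1, Finset.erase_eq_of_notMem hvmem]
      omega
  have hfilt : (S.erase v).filter (fun u => G.Adj v u) = G.neighborFinset v ∩ S := by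
    ext u
    simp only [Finset.mem_filter, Finset.mem_erase, Finset.mem_inter,
      SimpleGraph.mem_neighborFinset]
    constructor
    · rintro ⟨⟨_, hS⟩, ha⟩; exact ⟨ha, hS⟩
    · rintro ⟨ha, hS⟩; exact ⟨⟨fun h => G.irrefl (h ▸ ha), hS⟩, ha⟩
  have hsum : egD G S
      = (G.neighborFinset v ∩ S).card + ∑ u ∈ S.erase v, (G.neighborFinset u ∩ S).card := by
    rw [egD, ← Finset.add_sum_erase _ _ hv]
  rw [hsum, Finset.sum_congr rfl key, Finset.sum_add_distrib, ← Finset.card_filter, hfilt]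
  rw [egD]
  omega

lemma egD_split {S T : Finset V} (hTS : T ⊆ S)
    (hnc : ∀ x ∈ T, ∀ w ∈ S \ T, ¬ G.Adj x w) :
    egD G S = egD G T + egD G (S \ T) := by
  have h1 : ∀ v ∈ T, (G.neighborFinset v ∩ S).card = (G.neighborFinset v ∩ T).card := by
    intro v hv
    congr 1
    ext u
    simp only [Finset.mem_inter, SimpleGraph.mem_neighborFinset]
    constructor
    · rintro ⟨ha, hS⟩
      refine ⟨ha, ?_⟩
      by_contra hu
      exact hnc v hv u (Finset.mem_sdiff.2 ⟨hS, hu⟩) ha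
    · rintro ⟨ha, hT⟩; exact ⟨ha, hTS hT⟩
  have h2 : ∀ v ∈ S \ T, (G.neighborFinset v ∩ S).card = (G.neighborFinset v ∩ (S \ T)).card := by
    intro v hv
    congr 1
    ext u
    simp only [Finset.mem_inter, SimpleGraph.mem_neighborFinset, Finset.mem_sdiff]
    constructor
    · rintro ⟨ha, hS⟩
      exact ⟨ha, hS, fun hu => hnc u hu v hv ha.symm⟩
    · rintro ⟨ha, hS, _⟩; exact ⟨ha, hS⟩
  rw [egD, ← Finset.sum_sdiff hTS, Finset.sum_congr rfl h2,
    Finset.sum_congr rfl h1, egD, egD]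
  omega

lemma egD_le (t : ℕ) (ht : 4 ≤ t) (hfree : ¬ Contains G (SimpleGraph.pathGraph t))
    (S : Finset V) : egD G S ≤ (t - 2) * S.card := by
  classical
  induction S using Finset.strongInduction with
  | _ S ih =>
  by_cases hsmall : S.card < t
  · calc egD G S ≤ S.card * (S.card - 1) := egD_trivial G S
      _ ≤ S.card * (t - 2) := Nat.mul_le_mul_left _ (by omega)
      _ = (t - 2) * S.card := mul_comm _ _
  push_neg at hsmall
  by_cases hvert : ∃ v ∈ S, 2 * (G.neighborFinset v ∩ S).card ≤ t - 2
  · obtain ⟨v, hv, hdeg⟩ := hvert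
    have h1 : S.erase v ⊂ S := Finset.erase_ssubset hv
    have h2 := ih _ h1
    rw [Finset.card_erase_of_mem hv] at h2
    rw [egD_erase G hv]
    have hc1 : 1 ≤ S.card := Finset.card_pos.2 ⟨v, hv⟩
    obtain ⟨c, hc⟩ : ∃ c, S.card = c + 1 := ⟨S.card - 1, by omega⟩
    rw [hc] at h2 ⊢
    have h2' : egD G (S.erase v) ≤ (t - 2) * c := by
      rwa [Nat.add_sub_cancel] at h2
    have hmul : (t - 2) * (c + 1) = (t - 2) * c + (t - 2) := by ring
    omega
  push_neg at hvert
  have hmin : ∀ v ∈ S, t - 1 ≤ 2 * (G.neighborFinset v ∩ S).card := by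
    intro v hv
    have := hvert v hv
    omega
  have hS0 : S.Nonempty := Finset.card_pos.1 (by omega)
  obtain ⟨s0, hs0⟩ := hS0
  set P : ℕ → Prop := fun k => ∃ p : ℕ → V, EGPath G S k p with hPdef
  have hP1 : P 1 :=
    ⟨fun _ => s0, fun i _ => hs0, fun i hi j hj _ => by omega, fun i hi => by omega⟩
  set k := Nat.findGreatest P S.card with hkdef
  have hk1 : 1 ≤ k := Nat.le_findGreatest (by omega) hP1
  obtain ⟨p, hp⟩ : P k := Nat.findGreatest_spec (m := 1) (by omega) hP1
  have hnot : ¬ P (k + 1) := by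
    intro hPk
    have hle : k + 1 ≤ S.card := egPath_card_le G hPk.choose_spec
    exact Nat.findGreatest_is_greatest (by omega) hle hPk
  have hkt : k ≤ t - 1 := by
    by_contra hcon
    push_neg at hcon
    apply hfree
    refine ⟨fun i => p i.val, ?_, ?_⟩
    · intro a b hab
      have ha := a.isLt
      have hb := b.isLt
      exact Fin.ext (hp.2.1 a.val (by omega) b.val (by omega) hab)
    · intro u v huv
      have hu := u.isLt
      have hvlt := v.isLt
      rw [SimpleGraph.pathGraph_adj] at huv
      rcases huv with h | h
      · have hadj := hp.2.2 u.val (by omega)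
        rwa [h] at hadj
      · have hadj := hp.2.2 v.val (by omega)
        rw [h] at hadj
        exact hadj.symm
  set T := (Finset.range k).image p with hTdef
  have hTS : T ⊆ S := by
    intro x hx
    obtain ⟨i, hi, rfl⟩ := Finset.mem_image.1 hx
    exact hp.1 i (Finset.mem_range.1 hi)
  have hTcard : T.card = k := by
    rw [hTdef, Finset.card_image_of_injOn, Finset.card_range]
    intro i hi j hj hij
    exact hp.2.1 i (Finset.mem_range.1 hi) j (Finset.mem_range.1 hj) hij
  have hTmem : ∀ i < k, p i ∈ T := fun i hi =>
    Finset.mem_image.2 ⟨i, Finset.mem_range.2 hi, rfl⟩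
  by_cases hcross : ∃ x ∈ T, ∃ w ∈ S \ T, G.Adj x w
  · exfalso
    -- Step 1: neighbors of the endpoints lie on the path
    have hend0 : ∀ w, w ∈ S → G.Adj (p 0) w → w ∈ T := by
      intro w hwS hwadj
      by_contra hwT
      apply hnot
      refine ⟨fun m => if m = 0 then w else p (m - 1), ?_, ?_, ?_⟩
      · intro i hi
        dsimp only
        by_cases h0 : i = 0
        · simpa [h0] using hwS
        · rw [if_neg h0]
          exact hp.1 _ (by omega)
      · intro i hi j hj hij
        dsimp only at hij
        by_cases h0 : i = 0 <;> by_cases h1 : j = 0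
        · omega
        · rw [if_pos h0, if_neg h1] at hij
          exact absurd (hij ▸ hTmem (j - 1) (by omega)) hwT
        · rw [if_neg h0, if_pos h1] at hij
          exact absurd (hij ▸ hTmem (i - 1) (by omega) : w ∈ T) hwT
        · rw [if_neg h0, if_neg h1] at hij
          have := hp.2.1 (i - 1) (by omega) (j - 1) (by omega) hij
          omega
      · intro i hi
        dsimp only
        by_cases h0 : i = 0
        · subst h0
          simpa using hwadj.symm
        · have e1 : i + 1 - 1 = i := by omega
          have e2 : i - 1 + 1 = i := by omega
          rw [if_neg h0, if_neg (by omega : ¬ i + 1 = 0), e1]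
          have hadj := hp.2.2 (i - 1) (by omega)
          rwa [e2] at hadj
    have hpk1S : p (k - 1) ∈ S := hp.1 _ (by omega)
    have hp0S : p 0 ∈ S := hp.1 0 (by omega)
    have hendk : ∀ w, w ∈ S → G.Adj (p (k - 1)) w → w ∈ T := by
      intro w hwS hwadj
      by_contra hwT
      apply hnot
      refine ⟨fun m => if m < k then p m else w, ?_, ?_, ?_⟩
      · intro i hi
        dsimp only
        by_cases h0 : i < k
        · rw [if_pos h0]; exact hp.1 _ h0
        · rw [if_neg h0]; exact hwS
      · intro i hi j hj hij
        dsimp only at hij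
        by_cases h0 : i < k <;> by_cases h1 : j < k
        · rw [if_pos h0, if_pos h1] at hij
          exact hp.2.1 i h0 j h1 hij
        · rw [if_pos h0, if_neg h1] at hij
          exact absurd (hij ▸ hTmem i h0) hwT
        · rw [if_neg h0, if_pos h1] at hij
          exact absurd (hij.symm ▸ hTmem j h1) hwT
        · omega
      · intro i hi
        dsimp only
        by_cases h0 : i + 1 < k
        · rw [if_pos (by omega), if_pos h0]
          exact hp.2.2 i h0
        · have hik : i = k - 1 := by omega
          rw [if_pos (by omega), if_neg (by omega), hik]
          exact hwadj
    -- Step 2: the pigeonhole sets A and B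
    set A := (Finset.range (k - 1)).filter (fun j => G.Adj (p 0) (p (j + 1))) with hAdef
    set B := (Finset.range (k - 1)).filter (fun j => G.Adj (p (k - 1)) (p j)) with hBdef
    have hAcard : (G.neighborFinset (p 0) ∩ S).card ≤ A.card := by
      have hsub : G.neighborFinset (p 0) ∩ S ⊆ A.image (fun j => p (j + 1)) := by
        intro w hw
        rw [Finset.mem_inter, SimpleGraph.mem_neighborFinset] at hw
        have hwT : w ∈ T := hend0 w hw.2 hw.1
        obtain ⟨i, hi, rfl⟩ := Finset.mem_image.1 hwT
        rw [Finset.mem_range] at hi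
        have hi0 : i ≠ 0 := by
          intro h
          rw [h] at hw
          exact G.irrefl hw.1
        refine Finset.mem_image.2 ⟨i - 1, Finset.mem_filter.2
          ⟨Finset.mem_range.2 (by omega), ?_⟩, by rw [(by omega : i - 1 + 1 = i)]⟩
        rw [(by omega : i - 1 + 1 = i)]
        exact hw.1
      calc (G.neighborFinset (p 0) ∩ S).card
          ≤ (A.image (fun j => p (j + 1))).card := Finset.card_le_card hsub
        _ ≤ A.card := Finset.card_image_le
    have hBcard : (G.neighborFinset (p (k - 1)) ∩ S).card ≤ B.card := by
      have hsub : G.neighborFinset (p (k - 1)) ∩ S ⊆ B.image p := by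
        intro w hw
        rw [Finset.mem_inter, SimpleGraph.mem_neighborFinset] at hw
        have hwT : w ∈ T := hendk w hw.2 hw.1
        obtain ⟨i, hi, rfl⟩ := Finset.mem_image.1 hwT
        rw [Finset.mem_range] at hi
        have hik : i ≠ k - 1 := by
          intro h
          rw [h] at hw
          exact G.irrefl hw.1
        exact Finset.mem_image.2 ⟨i, Finset.mem_filter.2
          ⟨Finset.mem_range.2 (by omega), hw.1⟩, rfl⟩
      calc (G.neighborFinset (p (k - 1)) ∩ S).card
          ≤ (B.image p).card := Finset.card_le_card hsub
        _ ≤ B.card := Finset.card_image_le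
    have hdA : t - 1 ≤ 2 * A.card := le_trans (hmin _ hp0S) (by omega)
    have hdB : t - 1 ≤ 2 * B.card := le_trans (hmin _ hpk1S) (by omega)
    have hUcard : (A ∪ B).card ≤ k - 1 := by
      calc (A ∪ B).card ≤ (Finset.range (k - 1)).card :=
            Finset.card_le_card (Finset.union_subset (Finset.filter_subset _ _)
              (Finset.filter_subset _ _))
        _ = k - 1 := Finset.card_range _
    have hint : 1 ≤ (A ∩ B).card := by
      have h := Finset.card_union_add_card_inter A B
      omega
    obtain ⟨j, hj⟩ := Finset.card_pos.1 hint
    rw [Finset.mem_inter, hAdef, hBdef, Finset.mem_filter, Finset.mem_filter,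
      Finset.mem_range] at hj
    obtain ⟨⟨hjk, hadjA⟩, _, hadjB⟩ := hj
    have hk2 : 2 ≤ k := by omega
    -- Step 3: the cycle g
    set g : ℕ → V := fun m => if m ≤ j then p m else p (k + j - m) with hgdef
    have hgdef1 : ∀ m, m ≤ j → g m = p m := by
      intro m hm
      simp only [hgdef]
      rw [if_pos hm]
    have hgdef2 : ∀ m, ¬ m ≤ j → g m = p (k + j - m) := by
      intro m hm
      simp only [hgdef]
      rw [if_neg hm]
    have hgT : ∀ m < k, g m ∈ T := by
      intro m hm
      by_cases hmj : m ≤ j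
      · rw [hgdef1 m hmj]; exact hTmem m hm
      · rw [hgdef2 m hmj]; exact hTmem (k + j - m) (by omega)
    have hginj : ∀ m1 < k, ∀ m2 < k, g m1 = g m2 → m1 = m2 := by
      intro m1 hm1 m2 hm2 he
      by_cases h1 : m1 ≤ j <;> by_cases h2 : m2 ≤ j
      · rw [hgdef1 m1 h1, hgdef1 m2 h2] at he
        exact hp.2.1 m1 (by omega) m2 (by omega) he
      · rw [hgdef1 m1 h1, hgdef2 m2 h2] at he
        have := hp.2.1 m1 (by omega) (k + j - m2) (by omega) he
        omega
      · rw [hgdef2 m1 h1, hgdef1 m2 h2] at he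
        have := hp.2.1 (k + j - m1) (by omega) m2 (by omega) he
        omega
      · rw [hgdef2 m1 h1, hgdef2 m2 h2] at he
        have := hp.2.1 (k + j - m1) (by omega) (k + j - m2) (by omega) he
        omega
    have hgadj : ∀ m, m + 1 < k → G.Adj (g m) (g (m + 1)) := by
      intro m hm
      by_cases h1 : m + 1 ≤ j
      · rw [hgdef1 m (by omega), hgdef1 (m + 1) h1]
        exact hp.2.2 m hm
      · by_cases h2 : m ≤ j
        · -- m = j
          have hmj : m = j := by omega
          rw [hgdef1 m h2, hgdef2 (m + 1) h1, hmj,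
            (by omega : k + j - (j + 1) = k - 1)]
          exact hadjB.symm
        · rw [hgdef2 m h2, hgdef2 (m + 1) h1]
          have hadj := hp.2.2 (k + j - m - 1) (by omega)
          rw [(by omega : k + j - m - 1 + 1 = k + j - m)] at hadj
          rw [(by omega : k + j - (m + 1) = k + j - m - 1)]
          exact hadj.symm
    have hgwrap : G.Adj (g (k - 1)) (g 0) := by
      rw [hgdef1 0 (by omega), hgdef2 (k - 1) (by omega),
        (by omega : k + j - (k - 1) = j + 1)]
      exact hadjA.symm
    have hgcyc : ∀ a, G.Adj (g (a % k)) (g ((a + 1) % k)) := by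
      intro a
      have hak : a % k < k := Nat.mod_lt _ (by omega)
      have e1 : 1 % k = 1 := Nat.mod_eq_of_lt (by omega)
      by_cases hcase : a % k + 1 < k
      · have h1 : (a + 1) % k = a % k + 1 := by
          rw [Nat.add_mod, e1, Nat.mod_eq_of_lt hcase]
        rw [h1]
        exact hgadj _ hcase
      · have h2 : a % k = k - 1 := by omega
        have h1 : (a + 1) % k = 0 := by
          rw [Nat.add_mod, e1, h2, (by omega : k - 1 + 1 = k), Nat.mod_self]
        rw [h1, h2]
        exact hgwrap
    -- Step 4: use the crossing edge to build a longer path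
    obtain ⟨x, hxT, w, hwST, hxw⟩ := hcross
    obtain ⟨i, hi, rfl⟩ := Finset.mem_image.1 hxT
    rw [Finset.mem_range] at hi
    rw [Finset.mem_sdiff] at hwST
    obtain ⟨hwS, hwT⟩ := hwST
    set j2 : ℕ := if i ≤ j then i else k + j - i with hj2def
    have hj2k : j2 < k := by
      rw [hj2def]
      split <;> omega
    have hgj2 : g j2 = p i := by
      rw [hj2def]
      by_cases hij : i ≤ j
      · rw [if_pos hij, hgdef1 i hij]
      · rw [if_neg hij, hgdef2 (k + j - i) (by omega),
          (by omega : k + j - (k + j - i) = i)]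
    have hmodinj : ∀ a b, a < k → b < k → (j2 + a) % k = (j2 + b) % k → a = b := by
      intro a b ha hb hab
      have h1 : a ≡ b [MOD k] :=
        (Nat.ModEq.refl (n := k) j2).add_left_cancel hab
      have h2 := h1.eq_of_lt_of_lt ha hb
      exact h2
    apply hnot
    refine ⟨fun m => if m = 0 then w else g ((j2 + (m - 1)) % k), ?_, ?_, ?_⟩
    · intro m hm
      dsimp only
      by_cases h0 : m = 0
      · rw [if_pos h0]; exact hwS
      · rw [if_neg h0]
        exact hTS (hgT _ (Nat.mod_lt _ (by omega)))
    · intro m1 hm1 m2 hm2 he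
      dsimp only at he
      by_cases h1 : m1 = 0 <;> by_cases h2 : m2 = 0
      · omega
      · rw [if_pos h1, if_neg h2] at he
        exact absurd (he ▸ hgT _ (Nat.mod_lt _ (by omega))) hwT
      · rw [if_neg h1, if_pos h2] at he
        exact absurd (he.symm ▸ hgT _ (Nat.mod_lt _ (by omega)) : w ∈ T) hwT
      · rw [if_neg h1, if_neg h2] at he
        have := hginj _ (Nat.mod_lt _ (by omega)) _ (Nat.mod_lt _ (by omega)) he
        have := hmodinj (m1 - 1) (m2 - 1) (by omega) (by omega) this
        omega
    · intro m hm
      dsimp only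
      by_cases h0 : m = 0
      · subst h0
        rw [if_pos rfl, if_neg (by omega : ¬ (0:ℕ) + 1 = 0)]
        have e : (j2 + (0 + 1 - 1)) % k = j2 := by
          rw [(by omega : j2 + (0 + 1 - 1) = j2), Nat.mod_eq_of_lt hj2k]
        rw [e, hgj2]
        exact hxw.symm
      · rw [if_neg h0, if_neg (by omega : ¬ m + 1 = 0)]
        have e : j2 + (m + 1 - 1) = (j2 + (m - 1)) + 1 := by omega
        rw [e]
        exact hgcyc (j2 + (m - 1))
  · -- no crossing edge: split into T and S \ T
    push_neg at hcross
    have hsplit := egD_split G hTS hcross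
    have hTne : T.Nonempty := ⟨p 0, hTmem 0 (by omega)⟩
    have hST : S \ T ⊂ S := Finset.sdiff_ssubset hTS hTne
    have h2 := ih _ hST
    have h3 : egD G T ≤ (t - 2) * T.card := by
      calc egD G T ≤ T.card * (T.card - 1) := egD_trivial G T
        _ ≤ T.card * (t - 2) := Nat.mul_le_mul_left _ (by omega)
        _ = (t - 2) * T.card := mul_comm _ _
    have hcards : T.card + (S \ T).card = S.card := by
      have := Finset.card_le_card hTS
      rw [Finset.card_sdiff_of_subset hTS]
      omega
    calc egD G S = egD G T + egD G (S \ T) := hsplit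
      _ ≤ (t - 2) * T.card + (t - 2) * (S \ T).card := Nat.add_le_add h3 h2
      _ = (t - 2) * S.card := by rw [← Nat.mul_add, hcards]

end EG

/-- Erdős–Gallai. For every integer `t ≥ 4`, every `n`-vertex graph
containing no path on `t` vertices as a subgraph has at most `((t−2)/2)·n` edges. -/
theorem erdos_gallai_path {V : Type*} [Fintype V] [DecidableEq V]
    (t : ℕ) (ht : 4 ≤ t) (G : SimpleGraph V) [DecidableRel G.Adj]
    (hfree : ¬ Contains G (SimpleGraph.pathGraph t)) :
    (G.edgeFinset.card : ℚ) ≤ ((t : ℚ) - 2) / 2 * Fintype.card V := by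
  classical
  have key := egD_le G t ht hfree Finset.univ
  have hsum : egD G Finset.univ = 2 * G.edgeFinset.card := by
    rw [egD]
    have h : ∀ v ∈ Finset.univ, (G.neighborFinset v ∩ Finset.univ).card = G.degree v := by
      intro v _
      rw [Finset.inter_univ, SimpleGraph.card_neighborFinset_eq_degree]
    rw [Finset.sum_congr rfl h, SimpleGraph.sum_degrees_eq_twice_card_edges]
  rw [hsum, Finset.card_univ] at key
  have keyQ : (2 * G.edgeFinset.card : ℚ) ≤ ((t - 2 : ℕ) : ℚ) * (Fintype.card V : ℚ) := by
    exact_mod_cast key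
  have h2 : ((t - 2 : ℕ) : ℚ) = (t : ℚ) - 2 := by
    have h : (2 : ℕ) ≤ t := by omega
    push_cast [Nat.cast_sub h]
    ring
  rw [h2] at keyQ
  linarith
end

section
/- Let G be a graph on n vertices with m edges, and let k = m − n ≥ 0. Then there exists a set S ⊆ E(G) with |S| ≤ k such that G − S has no subgraph isomorphic to P_4, if and only if G contains a perfect triangle tiling. -/
open SimpleGraph


/-- A perfect triangle tiling (triangle factor) of `G`: a family of pairwise vertex-disjoint
triangles of `G` covering every vertex. -/
def HasTriangleFactor {V : Type*} (G : SimpleGraph V) : Prop :=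
  ∃ T : Set (Finset V),
    (∀ s ∈ T, s.card = 3 ∧ ∀ u ∈ s, ∀ v ∈ s, u ≠ v → G.Adj u v) ∧
    (∀ s ∈ T, ∀ s' ∈ T, s ≠ s' → ∀ v ∈ s, v ∉ s') ∧
    (∀ v : V, ∃ s ∈ T, v ∈ s)


lemma no_p4 {V : Type*} {H : SimpleGraph V} (h : ¬ Contains H (SimpleGraph.pathGraph 4))
    {a b c d : V} (hab : H.Adj a b) (hbc : H.Adj b c) (hcd : H.Adj c d)
    (hac : a ≠ c) (had : a ≠ d) (hbd : b ≠ d) : False := by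
  apply h
  have hab' := hab.ne
  have hbc' := hbc.ne
  have hcd' := hcd.ne
  refine ⟨![a, b, c, d], ?_, ?_⟩
  · intro i j hij
    fin_cases i <;> fin_cases j <;> simp_all
  · intro u v huv
    rw [pathGraph_adj] at huv
    have hba := hab.symm
    have hcb := hbc.symm
    have hdc := hcd.symm
    fin_cases u <;> fin_cases v <;> simp_all

lemma structural {V : Type*} [Fintype V] {H : SimpleGraph V}
    (hfree : ¬ Contains H (SimpleGraph.pathGraph 4))
    (hcard : Fintype.card V ≤ H.edgeSet.ncard) : HasTriangleFactor H := by
  classical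
  set IsTri : Finset V → Prop :=
    fun s => s.card = 3 ∧ ∀ u ∈ s, ∀ v ∈ s, u ≠ v → H.Adj u v with hIsTri
  -- Lemma A : neighbours of triangle vertices stay in the triangle
  have lemA : ∀ t : Finset V, IsTri t → ∀ a x, a ∈ t → H.Adj a x → x ∈ t := by
    intro t ht a x ha hax
    by_contra hx
    have h2 : (t.erase a).card = 2 := by
      rw [Finset.card_erase_of_mem ha, ht.1]
    obtain ⟨b, c, hbc, hbc2⟩ := Finset.card_eq_two.mp h2
    have hbmem : b ∈ t.erase a := by rw [hbc2]; simp
    have hcmem : c ∈ t.erase a := by rw [hbc2]; simp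
    have hb : b ∈ t := Finset.mem_of_mem_erase hbmem
    have hc : c ∈ t := Finset.mem_of_mem_erase hcmem
    have hba : b ≠ a := Finset.ne_of_mem_erase hbmem
    have hca : c ≠ a := Finset.ne_of_mem_erase hcmem
    have hadj_ab : H.Adj a b := ht.2 a ha b hb hba.symm
    have hadj_bc : H.Adj b c := ht.2 b hb c hc hbc
    exact no_p4 hfree hax.symm hadj_ab hadj_bc
      (fun hh => hx (hh ▸ hb)) (fun hh => hx (hh ▸ hc)) hca.symm
  -- triangles through a common vertex coincide
  have uniq : ∀ t t', IsTri t → IsTri t' → ∀ v, v ∈ t → v ∈ t' → t = t' := by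
    intro t t' ht ht' v hv hv'
    have hsub : t' ⊆ t := by
      intro y hy
      by_cases hyv : y = v
      · exact hyv ▸ hv
      · exact lemA t ht v y hv (ht'.2 v hv' y hy (fun hh => hyv hh.symm))
    exact (Finset.eq_of_subset_of_card_le hsub (by rw [ht.1, ht'.1])).symm
  set W : Set V := {v | ∃ t, IsTri t ∧ v ∈ t} with hW
  have obs : ∀ x y, H.Adj x y → x ∉ W → y ∉ W := by
    intro x y hxy hx hy
    obtain ⟨t, ht, hyt⟩ := hy
    exact hx ⟨t, ht, lemA t ht y x hyt hxy.symm⟩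
  -- degree-one lemma outside W
  have deg1 : ∀ x y, H.Adj x y → x ∉ W →
      (∀ z, H.Adj x z → z = y) ∨ (∀ z, H.Adj y z → z = x) := by
    intro x y hxy hx
    by_contra hcon
    push_neg at hcon
    obtain ⟨⟨z, hxz, hzy⟩, ⟨w, hyw, hwx⟩⟩ := hcon
    by_cases hzw : z = w
    · subst hzw
      refine hx ⟨{x, y, z}, ⟨?_, ?_⟩, by simp⟩
      · rw [Finset.card_insert_of_notMem (by simp [hxy.ne, hxz.ne]),
          Finset.card_insert_of_notMem (by simp [hyw.ne]), Finset.card_singleton]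
      · intro u hu v hv huv
        simp only [Finset.mem_insert, Finset.mem_singleton] at hu hv
        have h1 := hxy; have h2 := hxz; have h3 := hyw
        have h4 := hxy.symm; have h5 := hxz.symm; have h6 := hyw.symm
        rcases hu with rfl | rfl | rfl <;> rcases hv with rfl | rfl | rfl <;>
          simp only [ne_eq, not_true_eq_false] at huv ⊢ <;> assumption
    · exact no_p4 hfree hxz.symm hxy hyw hzy hzw (fun hh => hwx hh.symm)
  refine ⟨{t | IsTri t}, fun t ht => ht, ?_, ?_⟩
  · intro t ht t' ht' hne v hv hv'
    exact hne (uniq t t' ht ht' v hv hv')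
  -- coverage, by counting
  by_contra hcov
  push_neg at hcov
  obtain ⟨v₀, hv₀⟩ := hcov
  have hv₀W : v₀ ∉ W := fun ⟨t, ht, hvt⟩ => hv₀ t ht hvt
  haveI : Nonempty V := ⟨v₀⟩
  set Good : Sym2 V → V → Prop := fun e v =>
    (∃ t, IsTri t ∧ v ∈ t ∧ v ∉ e ∧ ∀ u ∈ e, u ∈ t) ∨
    (v ∈ e ∧ v ∉ W ∧ ∀ z, H.Adj v z → e = s(v, z)) with hGood
  -- totality
  have htot : ∀ e ∈ H.edgeSet, ∃ v, Good e v := by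
    intro e he
    induction e with
    | _ x y =>
      have hxy : H.Adj x y := he
      by_cases hx : x ∈ W
      · obtain ⟨t, ht, hxt⟩ := hx
        have hyt : y ∈ t := lemA t ht x y hxt hxy
        have h1 : ((t.erase x).erase y).card = 1 := by
          rw [Finset.card_erase_of_mem (Finset.mem_erase.mpr ⟨hxy.ne', hyt⟩),
            Finset.card_erase_of_mem hxt, ht.1]
        obtain ⟨v, hv⟩ := Finset.card_eq_one.mp h1
        have hvmem : v ∈ (t.erase x).erase y := by rw [hv]; simp
        have hvy : v ≠ y := Finset.ne_of_mem_erase hvmem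
        have hvx : v ≠ x := Finset.ne_of_mem_erase (Finset.mem_of_mem_erase hvmem)
        have hvt : v ∈ t := Finset.mem_of_mem_erase (Finset.mem_of_mem_erase hvmem)
        refine ⟨v, Or.inl ⟨t, ht, hvt, ?_, ?_⟩⟩
        · rw [Sym2.mem_iff]; push_neg; exact ⟨hvx, hvy⟩
        · intro u hu
          rcases Sym2.mem_iff.mp hu with rfl | rfl
          · exact hxt
          · exact hyt
      · by_cases hy : y ∈ W
        · exact absurd hy (obs x y hxy hx)
        · rcases deg1 x y hxy hx with hd | hd
          · refine ⟨x, Or.inr ⟨by simp, hx, fun z hz => ?_⟩⟩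
            rw [hd z hz]
          · refine ⟨y, Or.inr ⟨by simp, hy, fun z hz => ?_⟩⟩
            rw [hd z hz, Sym2.eq_swap]
  -- each edge with endpoints in a triangle t avoiding v equals the opposite edge
  have opp : ∀ t v, IsTri t → v ∈ t → ∀ e ∈ H.edgeSet, v ∉ e → (∀ u ∈ e, u ∈ t) →
      ∀ e' ∈ H.edgeSet, v ∉ e' → (∀ u ∈ e', u ∈ t) → e = e' := by
    intro t v ht hvt
    have h2 : (t.erase v).card = 2 := by rw [Finset.card_erase_of_mem hvt, ht.1]
    obtain ⟨p, q, hpq, hpq2⟩ := Finset.card_eq_two.mp h2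
    have key : ∀ e ∈ H.edgeSet, v ∉ e → (∀ u ∈ e, u ∈ t) → e = s(p, q) := by
      intro e he hve hmem
      induction e with
      | _ a b =>
        have hab : H.Adj a b := he
        have hav : a ≠ v := fun hh => hve (hh ▸ Sym2.mem_mk_left a b)
        have hbv : b ≠ v := fun hh => hve (hh ▸ Sym2.mem_mk_right a b)
        have ha : a ∈ t.erase v := Finset.mem_erase.mpr ⟨hav, hmem a (Sym2.mem_mk_left a b)⟩
        have hb : b ∈ t.erase v := Finset.mem_erase.mpr ⟨hbv, hmem b (Sym2.mem_mk_right a b)⟩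
        rw [hpq2] at ha hb
        simp only [Finset.mem_insert, Finset.mem_singleton] at ha hb
        rcases ha with rfl | rfl <;> rcases hb with rfl | rfl
        · exact absurd rfl hab.ne
        · rfl
        · exact Sym2.eq_swap
        · exact absurd rfl hab.ne
    intro e he hve hmem e' he' hve' hmem'
    rw [key e he hve hmem, key e' he' hve' hmem']
  -- injectivity
  have hinj : ∀ e ∈ H.edgeSet, ∀ e' ∈ H.edgeSet, ∀ v, Good e v → Good e' v → e = e' := by
    intro e he e' he' v hg hg'
    rcases hg with ⟨t, ht, hvt, hve, hmem⟩ | ⟨hve, hvW, huniq⟩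
    · rcases hg' with ⟨t', ht', hvt', hve', hmem'⟩ | ⟨hve', hvW', _⟩
      · have : t = t' := uniq t t' ht ht' v hvt hvt'
        subst this
        exact opp t v ht hvt e he hve hmem e' he' hve' hmem'
      · exact absurd ⟨t, ht, hvt⟩ hvW'
    · rcases hg' with ⟨t', ht', hvt', _, _⟩ | ⟨hve', _, huniq'⟩
      · exact absurd ⟨t', ht', hvt'⟩ hvW
      · obtain ⟨w, rfl⟩ := Sym2.mem_iff_exists.mp hve'
        have hadj : H.Adj v w := he'
        exact huniq w hadj
  -- the choice function
  have htot' : ∀ e : Sym2 V, ∃ v, e ∈ H.edgeSet → Good e v := by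
    intro e
    by_cases he : e ∈ H.edgeSet
    · obtain ⟨v, hv⟩ := htot e he
      exact ⟨v, fun _ => hv⟩
    · exact ⟨Classical.arbitrary V, fun hh => absurd hh he⟩
  choose f hf using htot'
  have himg : ∀ e ∈ H.edgeSet, f e ∈ (Set.univ : Set V) := fun _ _ => trivial
  have hInjOn : Set.InjOn f H.edgeSet := fun e he e' he' hh =>
    hinj e he e' he' (f e) (hf e he) (hh ▸ hf e' he')
  have hle : H.edgeSet.ncard ≤ Fintype.card V := by
    have := Set.ncard_le_ncard_of_injOn f himg hInjOn (Set.finite_univ)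
    rwa [Set.ncard_univ, Nat.card_eq_fintype_card] at this
  have heq : (f '' H.edgeSet) = Set.univ := by
    apply Set.eq_of_subset_of_ncard_le (Set.subset_univ _)
    · rw [Set.ncard_image_of_injOn hInjOn, Set.ncard_univ, Nat.card_eq_fintype_card]
      exact hcard
  -- final contradiction
  have hmem₀ : v₀ ∈ f '' H.edgeSet := by rw [heq]; trivial
  obtain ⟨e₀, he₀, hfe₀⟩ := hmem₀
  have hg₀ : Good e₀ v₀ := hfe₀ ▸ hf e₀ he₀
  rcases hg₀ with ⟨t, ht, hvt, _, _⟩ | ⟨hve₀, _, huniq₀⟩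
  · exact hv₀W ⟨t, ht, hvt⟩
  · obtain ⟨w, hw⟩ := Sym2.mem_iff_exists.mp hve₀
    have hadj : H.Adj v₀ w := by rw [hw] at he₀; exact he₀
    have hwW : w ∉ W := obs v₀ w hadj hv₀W
    have hmemw : w ∈ f '' H.edgeSet := by rw [heq]; trivial
    obtain ⟨e₁, he₁, hfe₁⟩ := hmemw
    have hg₁ : Good e₁ w := hfe₁ ▸ hf e₁ he₁
    rcases hg₁ with ⟨t, ht, hwt, _, _⟩ | ⟨hwe₁, _, huniq₁⟩
    · exact hwW ⟨t, ht, hwt⟩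
    · have he₁e₀ : e₁ = e₀ := by
        rw [huniq₁ v₀ hadj.symm, hw, Sym2.eq_swap]
      rw [he₁e₀, hfe₀] at hfe₁
      exact hadj.ne hfe₁

/-- Let `G` be a graph on `n` vertices with `m` edges and let
`k = m − n ≥ 0`. Then there is a set `S ⊆ E(G)` with `|S| ≤ k` such that `G − S` has no
subgraph isomorphic to `P₄`, if and only if `G` contains a perfect triangle tiling. -/
theorem p4_deletion_iff_triangleFactor {V : Type*} [Fintype V] (G : SimpleGraph V)
    (n m k : ℕ) (hn : n = Fintype.card V) (hm : m = G.edgeSet.ncard)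
    (hnm : n ≤ m) (hk : k = m - n) :
    (∃ S ⊆ G.edgeSet, S.ncard ≤ k ∧
        ¬ Contains (G.deleteEdges S) (SimpleGraph.pathGraph 4)) ↔
      HasTriangleFactor G := by
  classical
  constructor
  · rintro ⟨S, hSsub, hScard, hSfree⟩
    have hedge : (G.deleteEdges S).edgeSet = G.edgeSet \ S := G.edgeSet_deleteEdges S
    have hcount : (G.deleteEdges S).edgeSet.ncard = m - S.ncard := by
      rw [hedge, Set.ncard_diff hSsub (Set.toFinite S), ← hm]
    have hge : Fintype.card V ≤ (G.deleteEdges S).edgeSet.ncard := by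
      rw [hcount, ← hn]; omega
    obtain ⟨T, h1, h2, h3⟩ := structural hSfree hge
    exact ⟨T, fun s hs => ⟨(h1 s hs).1,
      fun u hu v hv huv => (G.deleteEdges_le S) ((h1 s hs).2 u hu v hv huv)⟩, h2, h3⟩
  · rintro ⟨T, h1, h2, h3⟩
    have common : ∀ t ∈ T, ∀ t' ∈ T, ∀ x : V, x ∈ t → x ∈ t' → t = t' := by
      intro t ht t' ht' x hx hx'
      by_contra hne
      exact h2 t ht t' ht' hne x hx hx'
    set ET : Set (Sym2 V) := {e | e ∈ G.edgeSet ∧ ∃ t ∈ T, ∀ u ∈ e, u ∈ t} with hET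
    have hETsub : ET ⊆ G.edgeSet := fun e he => he.1
    -- for each vertex, the data of its triangle and the opposite edge
    have key : ∀ v : V, ∃ p : Finset V × V × V, p.1 ∈ T ∧ v ∈ p.1 ∧ p.2.1 ∈ p.1 ∧
        p.2.2 ∈ p.1 ∧ p.2.1 ≠ p.2.2 ∧ v ≠ p.2.1 ∧ v ≠ p.2.2 ∧ G.Adj p.2.1 p.2.2 := by
      intro v
      obtain ⟨t, htT, hvt⟩ := h3 v
      have h2c : (t.erase v).card = 2 := by
        rw [Finset.card_erase_of_mem hvt, (h1 t htT).1]
      obtain ⟨b, c, hbc, hbc2⟩ := Finset.card_eq_two.mp h2c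
      have hbmem : b ∈ t.erase v := by rw [hbc2]; simp
      have hcmem : c ∈ t.erase v := by rw [hbc2]; simp
      have hbt := Finset.mem_of_mem_erase hbmem
      have hct := Finset.mem_of_mem_erase hcmem
      exact ⟨(t, b, c), htT, hvt, hbt, hct, hbc,
        (Finset.ne_of_mem_erase hbmem).symm, (Finset.ne_of_mem_erase hcmem).symm,
        (h1 t htT).2 b hbt c hct hbc⟩
    choose p hp using key
    set ψ : V → Sym2 V := fun v => s((p v).2.1, (p v).2.2) with hψdef
    have hψET : ∀ v, ψ v ∈ ET := by
      intro v
      obtain ⟨htT, hvt, hbt, hct, hbc, hvb, hvc, hadj⟩ := hp v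
      refine ⟨hadj, (p v).1, htT, ?_⟩
      intro u hu
      rcases Sym2.mem_iff.mp hu with rfl | rfl
      · exact hbt
      · exact hct
    have hψinj : Set.InjOn ψ Set.univ := by
      intro v _ v' _ hvv'
      obtain ⟨htT, hvt, hbt, hct, hbc, hvb, hvc, hadj⟩ := hp v
      obtain ⟨htT', hvt', hbt', hct', hbc', hvb', hvc', hadj'⟩ := hp v'
      simp only [hψdef, Sym2.eq_iff] at hvv'
      have hbmem' : (p v').2.1 ∈ (p v).1 := by
        rcases hvv' with ⟨h, _⟩ | ⟨_, h⟩
        · exact h ▸ hbt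
        · exact h ▸ hct
      have hteq : (p v).1 = (p v').1 := common _ htT _ htT' _ hbmem' hbt'
      have h1c : (((p v).1.erase (p v).2.1).erase (p v).2.2).card = 1 := by
        rw [Finset.card_erase_of_mem (Finset.mem_erase.mpr ⟨hbc.symm, hct⟩),
          Finset.card_erase_of_mem hbt, (h1 _ htT).1]
      obtain ⟨z, hz⟩ := Finset.card_eq_one.mp h1c
      have hvz : v ∈ (((p v).1.erase (p v).2.1).erase (p v).2.2) :=
        Finset.mem_erase.mpr ⟨hvc, Finset.mem_erase.mpr ⟨hvb, hvt⟩⟩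
      have hv'z : v' ∈ (((p v).1.erase (p v).2.1).erase (p v).2.2) := by
        refine Finset.mem_erase.mpr ⟨?_, Finset.mem_erase.mpr ⟨?_, hteq ▸ hvt'⟩⟩
        · rcases hvv' with ⟨_, h⟩ | ⟨_, h⟩
          · exact h.symm ▸ hvc'
          · exact h.symm ▸ hvb'
        · rcases hvv' with ⟨h, _⟩ | ⟨h, _⟩
          · exact h.symm ▸ hvb'
          · exact h.symm ▸ hvc'
      rw [hz] at hvz hv'z
      simp only [Finset.mem_singleton] at hvz hv'z
      rw [hvz, hv'z]
    have hcardET : Fintype.card V ≤ ET.ncard := by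
      have := Set.ncard_le_ncard_of_injOn ψ (fun v _ => hψET v) hψinj (Set.toFinite ET)
      rwa [Set.ncard_univ, Nat.card_eq_fintype_card] at this
    refine ⟨G.edgeSet \ ET, Set.diff_subset, ?_, ?_⟩
    · have hd : (G.edgeSet \ ET).ncard = m - ET.ncard := by
        rw [Set.ncard_diff hETsub (Set.toFinite ET), ← hm]
      have hETm : ET.ncard ≤ m := by
        rw [hm]; exact Set.ncard_le_ncard hETsub (Set.toFinite _)
      rw [hd, ← hn] at *
      omega
    · rintro ⟨f, hfinj, hhom⟩
      have hadjP : ∀ (i j : Fin 4), (SimpleGraph.pathGraph 4).Adj i j ↔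
          (i.val + 1 = j.val ∨ j.val + 1 = i.val) := fun i j => pathGraph_adj
      have h01 := hhom 0 1 (by rw [hadjP]; decide)
      have h12 := hhom 1 2 (by rw [hadjP]; decide)
      have h23 := hhom 2 3 (by rw [hadjP]; decide)
      have hET' : ∀ x y : V, (G.deleteEdges (G.edgeSet \ ET)).Adj x y → s(x, y) ∈ ET := by
        intro x y hxy
        obtain ⟨hadj, hnot⟩ := SimpleGraph.deleteEdges_adj.mp hxy
        by_contra hc
        exact hnot ⟨hadj, hc⟩
      obtain ⟨_, t01, ht01, hm01⟩ := hET' _ _ h01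
      obtain ⟨_, t12, ht12, hm12⟩ := hET' _ _ h12
      obtain ⟨_, t23, ht23, hm23⟩ := hET' _ _ h23
      have hf0 : f 0 ∈ t01 := hm01 _ (Sym2.mem_mk_left _ _)
      have hf1 : f 1 ∈ t01 := hm01 _ (Sym2.mem_mk_right _ _)
      have hf1' : f 1 ∈ t12 := hm12 _ (Sym2.mem_mk_left _ _)
      have hf2 : f 2 ∈ t12 := hm12 _ (Sym2.mem_mk_right _ _)
      have hf2' : f 2 ∈ t23 := hm23 _ (Sym2.mem_mk_left _ _)
      have hf3 : f 3 ∈ t23 := hm23 _ (Sym2.mem_mk_right _ _)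
      have he1 : t01 = t12 := common _ ht01 _ ht12 _ hf1 hf1'
      have he2 : t12 = t23 := common _ ht12 _ ht23 _ hf2 hf2'
      rw [← he1] at hf2
      rw [← he2, ← he1] at hf3
      have d01 : f 0 ≠ f 1 := fun h => absurd (hfinj h) (by decide)
      have d02 : f 0 ≠ f 2 := fun h => absurd (hfinj h) (by decide)
      have d03 : f 0 ≠ f 3 := fun h => absurd (hfinj h) (by decide)
      have d12 : f 1 ≠ f 2 := fun h => absurd (hfinj h) (by decide)
      have d13 : f 1 ≠ f 3 := fun h => absurd (hfinj h) (by decide)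
      have d23 : f 2 ≠ f 3 := fun h => absurd (hfinj h) (by decide)
      have hsub4 : ({f 0, f 1, f 2, f 3} : Finset V) ⊆ t01 := by
        intro u hu
        simp only [Finset.mem_insert, Finset.mem_singleton] at hu
        rcases hu with rfl | rfl | rfl | rfl
        exacts [hf0, hf1, hf2, hf3]
      have hc4 : ({f 0, f 1, f 2, f 3} : Finset V).card = 4 := by
        rw [Finset.card_insert_of_notMem (by simp [d01, d02, d03]),
          Finset.card_insert_of_notMem (by simp [d12, d13]),
          Finset.card_insert_of_notMem (by simp [d23]), Finset.card_singleton]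
      have := Finset.card_le_card hsub4
      rw [hc4, (h1 t01 ht01).1] at this
      omega
end

section
/- The clause gadget D satisfies: for U_i = {a_4^i, a_5^i, a_6^i} (i = 1,2,3) and any index set I ⊆ {1,2,3}, the graph D − ⋃_{i∈I} U_i admits a perfect triangle tiling if and only if |I| = 2. -/
/-- The clause gadget `D`: three copies `W^1, W^2, W^3` of the graph `W` (the 6-cycle
`a₁a₂a₃a₄a₅a₆` plus chords `a₁a₅`, `a₂a₄`, `a₂a₅`) with `a₁ʲ` identified with `a₃ʲ⁺¹`
(indices mod 3), plus the edges `a₂ʲa₂ʲ⁺¹`. Vertices are encoded as pairs `(j, t)` with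
`j : Fin 3` the copy and `t : Fin 5` encoding `a₁, a₂, a₄, a₅, a₆` respectively
(so `a₃ʲ = (j − 1, 0)`). -/
def clauseGadget : SimpleGraph (Fin 3 × Fin 5) :=
  SimpleGraph.fromRel fun x y =>
    ∃ j : Fin 3,
      (x = (j, 0) ∧ y = (j, 1)) ∨          -- a₁a₂
      (x = (j, 1) ∧ y = (j - 1, 0)) ∨      -- a₂a₃
      (x = (j - 1, 0) ∧ y = (j, 2)) ∨      -- a₃a₄
      (x = (j, 2) ∧ y = (j, 3)) ∨          -- a₄a₅
      (x = (j, 3) ∧ y = (j, 4)) ∨          -- a₅a₆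
      (x = (j, 4) ∧ y = (j, 0)) ∨          -- a₆a₁
      (x = (j, 0) ∧ y = (j, 3)) ∨          -- a₁a₅
      (x = (j, 1) ∧ y = (j, 2)) ∨          -- a₂a₄
      (x = (j, 1) ∧ y = (j, 3)) ∨          -- a₂a₅
      (x = (j, 1) ∧ y = (j + 1, 1))        -- a₂ʲa₂ʲ⁺¹

set_option synthInstance.maxHeartbeats 1000000 in
set_option synthInstance.maxSize 2000 in
instance : DecidableRel clauseGadget.Adj := fun a b =>
  decidable_of_iff _ (SimpleGraph.fromRel_adj _ a b).symm

/-- Ground-level version of the triangle-factor property for the induced subgraph. -/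
def GroundTiling (I : Finset (Fin 3)) : Prop :=
  ∃ T : Set (Finset (Fin 3 × Fin 5)),
    (∀ s ∈ T, (∀ v ∈ s, ¬(v.1 ∈ I ∧ (v.2 = 2 ∨ v.2 = 3 ∨ v.2 = 4))) ∧ s.card = 3 ∧
        ∀ u ∈ s, ∀ v ∈ s, u ≠ v → clauseGadget.Adj u v) ∧
    (∀ s ∈ T, ∀ s' ∈ T, s ≠ s' → ∀ v ∈ s, v ∉ s') ∧
    (∀ v : Fin 3 × Fin 5, ¬(v.1 ∈ I ∧ (v.2 = 2 ∨ v.2 = 3 ∨ v.2 = 4)) → ∃ s ∈ T, v ∈ s)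

lemma transfer (I : Finset (Fin 3)) :
    HasTriangleFactor
        (clauseGadget.induce {v | v.1 ∈ I ∧ (v.2 = 2 ∨ v.2 = 3 ∨ v.2 = 4)}ᶜ) ↔
      GroundTiling I := by
  classical
  set S : Set (Fin 3 × Fin 5) := {v | v.1 ∈ I ∧ (v.2 = 2 ∨ v.2 = 3 ∨ v.2 = 4)}ᶜ with hS
  have hmem : ∀ v : Fin 3 × Fin 5, v ∈ S ↔ ¬(v.1 ∈ I ∧ (v.2 = 2 ∨ v.2 = 3 ∨ v.2 = 4)) := by
    intro v; rw [hS, Set.mem_compl_iff, Set.mem_setOf_eq]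
  constructor
  · rintro ⟨T, h1, h2, h3⟩
    refine ⟨(fun s => s.image Subtype.val) '' T, ?_, ?_, ?_⟩
    · rintro t ⟨s, hs, rfl⟩
      obtain ⟨hc, hadj⟩ := h1 s hs
      refine ⟨?_, ?_, ?_⟩
      · intro v hv
        rw [Finset.mem_image] at hv
        obtain ⟨u, _, rfl⟩ := hv
        exact (hmem _).mp u.2
      · rw [Finset.card_image_of_injective _ Subtype.val_injective]; exact hc
      · intro u hu v hv huv
        rw [Finset.mem_image] at hu hv
        obtain ⟨u', hu', rfl⟩ := hu
        obtain ⟨v', hv', rfl⟩ := hv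
        have hne : u' ≠ v' := fun h => huv (by rw [h])
        exact hadj u' hu' v' hv' hne
    · rintro t ⟨s, hs, rfl⟩ t' ⟨s', hs', rfl⟩ hne v hv hv'
      have hss' : s ≠ s' := by rintro rfl; exact hne rfl
      rw [Finset.mem_image] at hv hv'
      obtain ⟨u, hu, rfl⟩ := hv
      obtain ⟨u', hu', he⟩ := hv'
      have : u' = u := Subtype.val_injective he
      subst this
      exact h2 s hs s' hs' hss' u' hu hu'
    · intro v hv
      obtain ⟨s, hs, hmem'⟩ := h3 ⟨v, (hmem v).mpr hv⟩
      exact ⟨s.image Subtype.val, ⟨s, hs, rfl⟩, Finset.mem_image_of_mem _ hmem'⟩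
  · rintro ⟨T, h1, h2, h3⟩
    refine ⟨(fun t => t.subtype (· ∈ S)) '' T, ?_, ?_, ?_⟩
    · rintro s ⟨t, ht, rfl⟩
      obtain ⟨hsub, hc, hadj⟩ := h1 t ht
      refine ⟨?_, ?_⟩
      · rw [Finset.card_subtype, Finset.filter_true_of_mem, hc]
        intro v hv
        exact (hmem v).mpr (hsub v hv)
      · intro u hu v hv huv
        rw [Finset.mem_subtype] at hu hv
        have : (u : Fin 3 × Fin 5) ≠ v := fun h => huv (Subtype.ext h)
        exact hadj _ hu _ hv this
    · rintro s ⟨t, ht, rfl⟩ s' ⟨t', ht', rfl⟩ hne v hv hv'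
      have htt' : t ≠ t' := by rintro rfl; exact hne rfl
      rw [Finset.mem_subtype] at hv hv'
      exact h2 t ht t' ht' htt' _ hv hv'
    · intro v
      obtain ⟨t, ht, hmem'⟩ := h3 v ((hmem _).mp v.2)
      exact ⟨t.subtype (· ∈ S), ⟨t, ht, rfl⟩, Finset.mem_subtype.mpr hmem'⟩

lemma three_eq {α : Type*} [DecidableEq α] {s : Finset α} (h : s.card = 3) {v : α}
    (hv : v ∈ s) : ∃ a b, a ≠ b ∧ v ≠ a ∧ v ≠ b ∧ s = {v, a, b} := by
  have h2 : (s.erase v).card = 2 := by rw [Finset.card_erase_of_mem hv, h]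
  obtain ⟨a, b, hab, he⟩ := Finset.card_eq_two.mp h2
  have ha : a ∈ s.erase v := he ▸ Finset.mem_insert_self a {b}
  have hb : b ∈ s.erase v := he ▸ Finset.mem_insert_of_mem (Finset.mem_singleton_self b)
  refine ⟨a, b, hab, (Finset.ne_of_mem_erase ha).symm, (Finset.ne_of_mem_erase hb).symm, ?_⟩
  rw [show ({v, a, b} : Finset α) = insert v {a, b} from rfl, ← he, Finset.insert_erase hv]

lemma forced {I : Finset (Fin 3)} {T : Set (Finset (Fin 3 × Fin 5))}
    (h1 : ∀ s ∈ T, (∀ v ∈ s, ¬(v.1 ∈ I ∧ (v.2 = 2 ∨ v.2 = 3 ∨ v.2 = 4))) ∧ s.card = 3 ∧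
        ∀ u ∈ s, ∀ v ∈ s, u ≠ v → clauseGadget.Adj u v)
    (h3 : ∀ v : Fin 3 × Fin 5, ¬(v.1 ∈ I ∧ (v.2 = 2 ∨ v.2 = 3 ∨ v.2 = 4)) → ∃ s ∈ T, v ∈ s)
    {v x y : Fin 3 × Fin 5} (hv : ¬(v.1 ∈ I ∧ (v.2 = 2 ∨ v.2 = 3 ∨ v.2 = 4))) (hxy : x ≠ y)
    (key : ∀ a, clauseGadget.Adj v a → ¬(a.1 ∈ I ∧ (a.2 = 2 ∨ a.2 = 3 ∨ a.2 = 4)) →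
      a = x ∨ a = y) :
    ∃ t ∈ T, t = {v, x, y} := by
  obtain ⟨t, ht, hvt⟩ := h3 v hv
  obtain ⟨hsub, hc, hadj⟩ := h1 t ht
  obtain ⟨a, b, hab, hva, hvb, rfl⟩ := three_eq hc hvt
  have hmema : a ∈ ({v, a, b} : Finset (Fin 3 × Fin 5)) := by simp
  have hmemb : b ∈ ({v, a, b} : Finset (Fin 3 × Fin 5)) := by simp
  have ka := key a (hadj v (by simp) a hmema hva) (hsub a hmema)
  have kb := key b (hadj v (by simp) b hmemb hvb) (hsub b hmemb)
  refine ⟨_, ht, ?_⟩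
  rcases ka with rfl | rfl <;> rcases kb with rfl | rfl <;>
    first
      | exact absurd rfl hab
      | rfl
      | exact congrArg (insert _) (Finset.pair_comm _ _)

lemma noTiling {I : Finset (Fin 3)} {p px py q qx qy w u1 u2 u3 : Fin 3 × Fin 5}
    (hp : ¬(p.1 ∈ I ∧ (p.2 = 2 ∨ p.2 = 3 ∨ p.2 = 4))) (hpxy : px ≠ py)
    (keyp : ∀ a, clauseGadget.Adj p a → ¬(a.1 ∈ I ∧ (a.2 = 2 ∨ a.2 = 3 ∨ a.2 = 4)) →
      a = px ∨ a = py)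
    (hq : ¬(q.1 ∈ I ∧ (q.2 = 2 ∨ q.2 = 3 ∨ q.2 = 4))) (hqxy : qx ≠ qy)
    (keyq : ∀ a, clauseGadget.Adj q a → ¬(a.1 ∈ I ∧ (a.2 = 2 ∨ a.2 = 3 ∨ a.2 = 4)) →
      a = qx ∨ a = qy)
    (hw : ¬(w.1 ∈ I ∧ (w.2 = 2 ∨ w.2 = 3 ∨ w.2 = 4)))
    (keyw : ∀ a, clauseGadget.Adj w a → ¬(a.1 ∈ I ∧ (a.2 = 2 ∨ a.2 = 3 ∨ a.2 = 4)) →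
      a = u1 ∨ a = u2 ∨ a = u3)
    (hu1 : u1 ∈ ({p, px, py} : Finset (Fin 3 × Fin 5)))
    (hu2 : u2 ∈ ({q, qx, qy} : Finset (Fin 3 × Fin 5)))
    (hwp : w ∉ ({p, px, py} : Finset (Fin 3 × Fin 5)))
    (hwq : w ∉ ({q, qx, qy} : Finset (Fin 3 × Fin 5))) :
    ¬ GroundTiling I := by
  rintro ⟨T, h1, h2, h3⟩
  obtain ⟨tp, htpT, htp⟩ := forced h1 h3 hp hpxy keyp
  obtain ⟨tq, htqT, htq⟩ := forced h1 h3 hq hqxy keyq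
  obtain ⟨t, htT, hwt⟩ := h3 w hw
  obtain ⟨hsub, hc, hadj⟩ := h1 t htT
  obtain ⟨a, b, hab, hwa, hwb, rfl⟩ := three_eq hc hwt
  have hmema : a ∈ ({w, a, b} : Finset (Fin 3 × Fin 5)) := by simp
  have hmemb : b ∈ ({w, a, b} : Finset (Fin 3 × Fin 5)) := by simp
  have hnep : ({w, a, b} : Finset (Fin 3 × Fin 5)) ≠ tp := by
    rintro rfl; exact hwp (htp ▸ hwt)
  have hneq : ({w, a, b} : Finset (Fin 3 × Fin 5)) ≠ tq := by
    rintro rfl; exact hwq (htq ▸ hwt)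
  have hap : a ∉ tp := h2 _ htT _ htpT hnep a hmema
  have haq : a ∉ tq := h2 _ htT _ htqT hneq a hmema
  have hbp : b ∉ tp := h2 _ htT _ htpT hnep b hmemb
  have hbq : b ∉ tq := h2 _ htT _ htqT hneq b hmemb
  have ka := keyw a (hadj w (by simp) a hmema hwa) (hsub a hmema)
  have kb := keyw b (hadj w (by simp) b hmemb hwb) (hsub b hmemb)
  have ha3 : a = u3 := by
    rcases ka with rfl | rfl | rfl
    · exact absurd (htp ▸ hu1) hap
    · exact absurd (htq ▸ hu2) haq
    · rfl
  have hb3 : b = u3 := by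
    rcases kb with rfl | rfl | rfl
    · exact absurd (htp ▸ hu1) hbp
    · exact absurd (htq ▸ hu2) hbq
    · rfl
  exact hab (ha3.trans hb3.symm)


lemma existsTiling {I : Finset (Fin 3)} {t1 t2 t3 : Finset (Fin 3 × Fin 5)}
    (H1 : (∀ v ∈ t1, ¬(v.1 ∈ I ∧ (v.2 = 2 ∨ v.2 = 3 ∨ v.2 = 4))) ∧ t1.card = 3 ∧
        ∀ u ∈ t1, ∀ v ∈ t1, u ≠ v → clauseGadget.Adj u v)
    (H2 : (∀ v ∈ t2, ¬(v.1 ∈ I ∧ (v.2 = 2 ∨ v.2 = 3 ∨ v.2 = 4))) ∧ t2.card = 3 ∧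
        ∀ u ∈ t2, ∀ v ∈ t2, u ≠ v → clauseGadget.Adj u v)
    (H3 : (∀ v ∈ t3, ¬(v.1 ∈ I ∧ (v.2 = 2 ∨ v.2 = 3 ∨ v.2 = 4))) ∧ t3.card = 3 ∧
        ∀ u ∈ t3, ∀ v ∈ t3, u ≠ v → clauseGadget.Adj u v)
    (hd12 : ∀ v ∈ t1, v ∉ t2) (hd13 : ∀ v ∈ t1, v ∉ t3) (hd23 : ∀ v ∈ t2, v ∉ t3)
    (hcov : ∀ v : Fin 3 × Fin 5, ¬(v.1 ∈ I ∧ (v.2 = 2 ∨ v.2 = 3 ∨ v.2 = 4)) →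
        v ∈ t1 ∨ v ∈ t2 ∨ v ∈ t3) :
    GroundTiling I := by
  refine ⟨{t1, t2, t3}, ?_, ?_, ?_⟩
  · intro s hs
    simp only [Set.mem_insert_iff, Set.mem_singleton_iff] at hs
    rcases hs with rfl | rfl | rfl
    · exact H1
    · exact H2
    · exact H3
  · intro s hs s' hs' hne v hv hv'
    simp only [Set.mem_insert_iff, Set.mem_singleton_iff] at hs hs'
    rcases hs with rfl | rfl | rfl <;> rcases hs' with rfl | rfl | rfl
    · exact hne rfl
    · exact hd12 v hv hv'
    · exact hd13 v hv hv'
    · exact hd12 v hv' hv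
    · exact hne rfl
    · exact hd23 v hv hv'
    · exact hd13 v hv' hv
    · exact hd23 v hv' hv
    · exact hne rfl
  · intro v hv
    rcases hcov v hv with h | h | h
    · exact ⟨t1, by simp, h⟩
    · exact ⟨t2, by simp, h⟩
    · exact ⟨t3, by simp, h⟩

set_option maxRecDepth 4000 in
/-- For `Uᵢ = {a₄ⁱ, a₅ⁱ, a₆ⁱ}` (encoded as `(i, 2), (i, 3), (i, 4)`) and
any index set `I ⊆ {1,2,3}`, the graph `D − ⋃_{i∈I} Uᵢ` admits a perfect triangle tiling if
and only if `|I| = 2`. -/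
theorem clauseGadget_triangleFactor_iff (I : Finset (Fin 3)) :
    HasTriangleFactor
        (clauseGadget.induce {v | v.1 ∈ I ∧ (v.2 = 2 ∨ v.2 = 3 ∨ v.2 = 4)}ᶜ) ↔
      I.card = 2 := by
  rw [transfer I]
  by_cases h0 : (0 : Fin 3) ∈ I <;> by_cases h1 : (1 : Fin 3) ∈ I <;>
    by_cases h2 : (2 : Fin 3) ∈ I
  · -- I = {0,1,2}
    have hI : I = {0, 1, 2} := Finset.ext fun x => by fin_cases x <;> simp [h0, h1, h2]
    subst hI
    exact iff_of_false
      (noTiling (p := (0, 0)) (px := (0, 1)) (py := (1, 1))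
        (q := (1, 0)) (qx := (1, 1)) (qy := (2, 1))
        (w := (2, 0)) (u1 := (0, 1)) (u2 := (2, 1)) (u3 := (2, 1))
        (by decide) (by decide) (by decide) (by decide) (by decide) (by decide)
        (by decide) (by decide) (by decide) (by decide) (by decide) (by decide))
      (by decide)
  · -- I = {0,1}
    have hI : I = {0, 1} := Finset.ext fun x => by fin_cases x <;> simp [h0, h1, h2]
    subst hI
    exact iff_of_true
      (existsTiling (t1 := {(2,0),(2,3),(2,4)}) (t2 := {(2,2),(2,1),(1,0)}) (t3 := {(0,0),(0,1),(1,1)})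
        (by decide) (by decide) (by decide) (by decide) (by decide) (by decide) (by decide))
      (by decide)
  · -- I = {0,2}
    have hI : I = {0, 2} := Finset.ext fun x => by fin_cases x <;> simp [h0, h1, h2]
    subst hI
    exact iff_of_true
      (existsTiling (t1 := {(1,0),(1,3),(1,4)}) (t2 := {(1,2),(1,1),(0,0)}) (t3 := {(2,0),(2,1),(0,1)})
        (by decide) (by decide) (by decide) (by decide) (by decide) (by decide) (by decide))
      (by decide)
  · -- I = {0}
    have hI : I = {0} := Finset.ext fun x => by fin_cases x <;> simp [h0, h1, h2]
    subst hI
    exact iff_of_false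
      (noTiling (p := (1, 4)) (px := (1, 0)) (py := (1, 3))
        (q := (2, 4)) (qx := (2, 0)) (qy := (2, 3))
        (w := (2, 2)) (u1 := (1, 0)) (u2 := (2, 3)) (u3 := (2, 1))
        (by decide) (by decide) (by decide) (by decide) (by decide) (by decide)
        (by decide) (by decide) (by decide) (by decide) (by decide) (by decide))
      (by decide)
  · -- I = {1,2}
    have hI : I = {1, 2} := Finset.ext fun x => by fin_cases x <;> simp [h0, h1, h2]
    subst hI
    exact iff_of_true
      (existsTiling (t1 := {(0,0),(0,3),(0,4)}) (t2 := {(0,2),(0,1),(2,0)}) (t3 := {(1,0),(1,1),(2,1)})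
        (by decide) (by decide) (by decide) (by decide) (by decide) (by decide) (by decide))
      (by decide)
  · -- I = {1}
    have hI : I = {1} := Finset.ext fun x => by fin_cases x <;> simp [h0, h1, h2]
    subst hI
    exact iff_of_false
      (noTiling (p := (2, 4)) (px := (2, 0)) (py := (2, 3))
        (q := (0, 4)) (qx := (0, 0)) (qy := (0, 3))
        (w := (0, 2)) (u1 := (2, 0)) (u2 := (0, 3)) (u3 := (0, 1))
        (by decide) (by decide) (by decide) (by decide) (by decide) (by decide)
        (by decide) (by decide) (by decide) (by decide) (by decide) (by decide))
      (by decide)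
  · -- I = {2}
    have hI : I = {2} := Finset.ext fun x => by fin_cases x <;> simp [h0, h1, h2]
    subst hI
    exact iff_of_false
      (noTiling (p := (0, 4)) (px := (0, 0)) (py := (0, 3))
        (q := (1, 4)) (qx := (1, 0)) (qy := (1, 3))
        (w := (1, 2)) (u1 := (0, 0)) (u2 := (1, 3)) (u3 := (1, 1))
        (by decide) (by decide) (by decide) (by decide) (by decide) (by decide)
        (by decide) (by decide) (by decide) (by decide) (by decide) (by decide))
      (by decide)
  · -- I = ∅
    have hI : I = ∅ := Finset.ext fun x => by fin_cases x <;> simp [h0, h1, h2]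
    subst hI
    exact iff_of_false
      (noTiling (p := (0, 4)) (px := (0, 0)) (py := (0, 3))
        (q := (2, 4)) (qx := (2, 0)) (qy := (2, 3))
        (w := (0, 2)) (u1 := (0, 3)) (u2 := (2, 0)) (u3 := (0, 1))
        (by decide) (by decide) (by decide) (by decide) (by decide) (by decide)
        (by decide) (by decide) (by decide) (by decide) (by decide) (by decide))
      (by decide)
end
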